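/- Let p be a prime and let r, m, e be positive integers with m = r+2 and e ≥ 2. Then c_{p,r,m,e} = binom(rp, m−1) · binom(p+m−2, m−1)^{e−2} · binom(p+m−3, m−1). -/

import Mathlib

open Finset

lemma Multiset.card_sum' {ι α : Type*} (s : Finset ι) (f : ι → Multiset α) :
    Multiset.card (∑ i ∈ s, f i) = ∑ i ∈ s, Multiset.card (f i) := by
  classical
  induction s using Finset.cons_induction with
  | empty => simp
  | cons a s ha ih => simp [Finset.sum_cons, ih]

lemma card_tuple_sum (m k : ℕ) :
    Nat.card {f : Fin m → ℕ // ∑ j, f j = k} = (m + k - 1).choose k := by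
  have e : {f : Fin m → ℕ // ∑ j, f j = k} ≃ Sym (Fin m) k := {
    toFun := fun f => ⟨∑ j, Multiset.replicate (f.1 j) j, by
      rw [Multiset.card_sum']
      simpa using f.2⟩
    invFun := fun s => ⟨fun j => s.1.count j, by
      rw [Multiset.sum_count_eq_card (fun a _ => Finset.mem_univ a), s.2]⟩
    left_inv := fun f => by
      ext j
      simp [Multiset.count_sum', Multiset.count_replicate]
    right_inv := fun s => by
      apply Subtype.ext
      ext a
      simp [Multiset.count_sum', Multiset.count_replicate] }
  rw [Nat.card_congr e, Nat.card_eq_fintype_card, Sym.card_sym_eq_multichoose,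
    Nat.multichoose_eq, Fintype.card_fin]

lemma sum_compl_aux (m p : ℕ) (d : Fin m → ℕ) (hd : ∀ j, d j ≤ p - 1) :
    (∑ j, (p - 1 - d j)) + ∑ j, d j = m * (p - 1) := by
  rw [← Finset.sum_add_distrib]
  have : ∀ j ∈ Finset.univ, ((p - 1) - d j) + d j = p - 1 := fun j _ => by
    have := hd j; omega
  rw [Finset.sum_congr rfl this, Finset.sum_const, Finset.card_univ, Fintype.card_fin,
    smul_eq_mul]

lemma le_sum_aux (m : ℕ) (b : Fin m → ℕ) (j : Fin m) : b j ≤ ∑ i, b i :=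
  Finset.single_le_sum (f := fun j => b j) (fun _ _ => Nat.zero_le _) (Finset.mem_univ j)

lemma card_bounded_tuple_sum (m p s k : ℕ) (hp : 1 ≤ p) (hs : s + k = m * (p - 1))
    (hk : k < p) :
    Nat.card {d : Fin m → ℕ // (∀ j, d j < p) ∧ ∑ j, d j = s} = (m + k - 1).choose k := by
  rw [← card_tuple_sum m k]
  apply Nat.card_congr
  refine {
    toFun := fun d => ⟨fun j => (p - 1) - d.1 j, ?_⟩
    invFun := fun b => ⟨fun j => (p - 1) - b.1 j, ?_, ?_⟩
    left_inv := fun d => ?_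
    right_inv := fun b => ?_ }
  · have h1 : ∀ j, d.1 j ≤ p - 1 := fun j => by have := d.2.1 j; omega
    have h2 := sum_compl_aux m p d.1 h1
    have h3 := d.2.2
    beta_reduce
    omega
  · intro j
    have h1 := le_sum_aux m b.1 j
    have h2 := b.2
    beta_reduce
    omega
  · have h1 : ∀ j, b.1 j ≤ p - 1 := fun j => by
      have h1 := le_sum_aux m b.1 j
      have h2 := b.2
      omega
    have h2 := sum_compl_aux m p b.1 h1
    have h3 := b.2
    beta_reduce
    omega
  · apply Subtype.ext; funext j
    have := d.2.1 j
    show (p - 1) - ((p - 1) - d.1 j) = d.1 j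
    omega
  · apply Subtype.ext; funext j
    have h1 := le_sum_aux m b.1 j
    have h2 := b.2
    show (p - 1) - ((p - 1) - b.1 j) = b.1 j
    omega



lemma mod_mul_decomp (n p q : ℕ) : n % (p * q) = n % p + p * (n / p % q) := by
  conv_lhs => rw [← Nat.mod_add_div (n % (p * q)) p]
  rw [Nat.mod_mod_of_dvd _ ⟨q, rfl⟩, Nat.mod_mul_right_div_self]

lemma add_mul_div_self (d b p : ℕ) (hp : 0 < p) (hd : d < p) : (d + p * b) / p = b := by
  rw [Nat.add_mul_div_left _ _ hp, Nat.div_eq_of_lt hd, Nat.zero_add]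

lemma add_mul_mod_self (d b p : ℕ) (hd : d < p) : (d + p * b) % p = d := by
  rw [Nat.add_mul_mod_self_left, Nat.mod_eq_of_lt hd]

lemma peel (p m s T' E : ℕ) (hp : 2 ≤ p) (F g : ℕ → ℕ)
    (hF1 : F 1 = s) (hFs : ∀ i, 1 ≤ i → i ≤ E → F (i + 1) = s + p * g i) :
    Nat.card {a : Fin m → ℕ // ∑ j, a j = s + p * T' ∧
      ∀ i, 1 ≤ i → i ≤ E + 1 → ∑ j, a j % p ^ i = F i}
    = Nat.card {d : Fin m → ℕ // (∀ j, d j < p) ∧ ∑ j, d j = s}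
      * Nat.card {b : Fin m → ℕ // ∑ j, b j = T' ∧
          ∀ i, 1 ≤ i → i ≤ E → ∑ j, b j % p ^ i = g i} := by
  have hp0 : 0 < p := by omega
  rw [← Nat.card_prod]
  apply Nat.card_congr
  refine {
    toFun := fun a => (⟨fun j => a.1 j % p, fun j => Nat.mod_lt _ hp0, ?_⟩,
      ⟨fun j => a.1 j / p, ?_, ?_⟩)
    invFun := fun x => ⟨fun j => x.1.1 j + p * x.2.1 j, ?_, ?_⟩
    left_inv := fun a => ?_
    right_inv := fun x => ?_ }
  · -- ∑ a % p = s
    have h := a.2.2 1 le_rfl (by omega)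
    simpa [hF1] using h
  · -- ∑ a / p = T'
    have hs1 : ∑ j, a.1 j % p = s := by
      have h := a.2.2 1 le_rfl (by omega)
      simpa [hF1] using h
    have hdec : ∑ j, a.1 j = (∑ j, a.1 j % p) + p * ∑ j, a.1 j / p := by
      calc ∑ j, a.1 j = ∑ j, (a.1 j % p + p * (a.1 j / p)) :=
            Finset.sum_congr rfl fun j _ => (Nat.mod_add_div _ _).symm
        _ = (∑ j, a.1 j % p) + ∑ j, p * (a.1 j / p) := Finset.sum_add_distrib
        _ = (∑ j, a.1 j % p) + p * ∑ j, a.1 j / p := by rw [Finset.mul_sum]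
    have htot := a.2.1
    rw [htot, hs1] at hdec
    have := Nat.eq_of_mul_eq_mul_left hp0 (Nat.add_left_cancel hdec)
    beta_reduce
    exact this.symm
  · -- mod conditions for the quotient
    intro i hi1 hiE
    have h := a.2.2 (i + 1) (by omega) (by omega)
    rw [hFs i hi1 hiE] at h
    have hs1 : ∑ j, a.1 j % p = s := by
      have h := a.2.2 1 le_rfl (by omega)
      simpa [hF1] using h
    have hdec : ∑ j, a.1 j % p ^ (i + 1)
        = (∑ j, a.1 j % p) + p * ∑ j, a.1 j / p % p ^ i := by
      calc ∑ j, a.1 j % p ^ (i + 1) = ∑ j, (a.1 j % p + p * (a.1 j / p % p ^ i)) :=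
            Finset.sum_congr rfl fun j _ => by rw [pow_succ', mod_mul_decomp]
        _ = (∑ j, a.1 j % p) + ∑ j, p * (a.1 j / p % p ^ i) := Finset.sum_add_distrib
        _ = (∑ j, a.1 j % p) + p * ∑ j, a.1 j / p % p ^ i := by rw [Finset.mul_sum]
    rw [hdec, hs1] at h
    have := Nat.eq_of_mul_eq_mul_left hp0 (Nat.add_left_cancel h)
    beta_reduce
    exact this
  · -- sum of reconstruction
    obtain ⟨⟨d, hd, hds⟩, ⟨b, hbs, hbm⟩⟩ := x
    show ∑ j, (d j + p * b j) = s + p * T'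
    rw [Finset.sum_add_distrib, ← Finset.mul_sum, hds, hbs]
  · -- mod conditions of reconstruction
    obtain ⟨⟨d, hd, hds⟩, ⟨b, hbs, hbm⟩⟩ := x
    intro i hi1 hiE
    show ∑ j, (d j + p * b j) % p ^ i = F i
    obtain ⟨i, rfl⟩ : ∃ i', i = i' + 1 := ⟨i - 1, by omega⟩
    have hdec : ∀ j, (d j + p * b j) % p ^ (i + 1) = d j + p * (b j % p ^ i) := by
      intro j
      rw [pow_succ', mod_mul_decomp, add_mul_mod_self _ _ _ (hd j),
        add_mul_div_self _ _ _ hp0 (hd j)]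
    rw [Finset.sum_congr rfl fun j _ => hdec j, Finset.sum_add_distrib, ← Finset.mul_sum, hds]
    rcases Nat.eq_zero_or_pos i with hi0 | hi0
    · subst hi0
      simp [hF1, Nat.mod_one]
    · rw [hbm i hi0 (by omega), hFs i hi0 (by omega)]
  · apply Subtype.ext
    funext j
    show a.1 j % p + p * (a.1 j / p) = a.1 j
    exact Nat.mod_add_div _ _
  · obtain ⟨⟨d, hd, hds⟩, ⟨b, hbs, hbm⟩⟩ := x
    refine Prod.ext ?_ ?_
    · apply Subtype.ext
      funext j
      show (d j + p * b j) % p = d j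
      exact add_mul_mod_self _ _ _ (hd j)
    · apply Subtype.ext
      funext j
      show (d j + p * b j) / p = b j
      exact add_mul_div_self _ _ _ hp0 (hd j)

lemma ge_iff_eq_aux (p r m e i : ℕ) (hp : 2 ≤ p) (hm : m = r + 2) (hi1 : 1 ≤ i)
    (hie : i ≤ e - 1) (he : 2 ≤ e) (a : Fin m → ℕ) (hsum : ∑ j, a j = r * (p ^ e - 1)) :
    r * (p ^ i - 1) + p ^ i ≤ ∑ j, a j % p ^ i ↔
      ∑ j, a j % p ^ i = r * (p ^ i - 1) + p ^ i := by
  set q := p ^ i with hq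
  set X := ∑ j, a j % q with hX
  have hq2 : 2 ≤ q := by
    have : 1 < p ^ i := Nat.one_lt_pow (by omega) (by omega)
    omega
  have hub : X ≤ m * (q - 1) := by
    calc X ≤ ∑ _j : Fin m, (q - 1) := by
          refine Finset.sum_le_sum fun j _ => ?_
          have := Nat.mod_lt (a j) (show 0 < q by omega)
          omega
      _ = m * (q - 1) := by
          rw [Finset.sum_const, Finset.card_univ, Fintype.card_fin, smul_eq_mul]
  have hub' : X ≤ r * (q - 1) + 2 * (q - 1) := by
    have : m * (q - 1) = r * (q - 1) + 2 * (q - 1) := by rw [hm, add_mul]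
    omega
  obtain ⟨k, hk⟩ : q ∣ p ^ e := pow_dvd_pow p (by omega)
  have hk1 : 1 ≤ k := by
    rcases Nat.eq_zero_or_pos k with h | h
    · exfalso
      subst h
      rw [mul_zero] at hk
      have : 0 < p ^ e := pow_pos (by omega) e
      omega
    · exact h
  have hmodX : X % q = (r * (p ^ e - 1)) % q := by
    rw [← hsum]
    conv_rhs => rw [Finset.sum_nat_mod]
  have hexp : r * (p ^ e - 1) = q * (r * (k - 1)) + r * (q - 1) := by
    have h1 : (1:ℕ) ≤ q := by omega
    have h2 : (1:ℕ) ≤ p ^ e := Nat.one_le_pow _ _ (by omega)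
    have hk' : ((p : ℤ)) ^ e = (q : ℤ) * k := by exact_mod_cast hk
    zify [h1, h2, hk1]
    linear_combination (r : ℤ) * hk'
  have hmodt : (r * (q - 1) + q) % q = (r * (p ^ e - 1)) % q := by
    rw [hexp, Nat.add_mod_right, Nat.mul_add_mod]
  constructor
  · intro hge
    have hmm : X % q = (r * (q - 1) + q) % q := by rw [hmodX, hmodt]
    have hdvd : q ∣ X - (r * (q - 1) + q) :=
      (Nat.modEq_iff_dvd' hge).mp (Nat.ModEq.symm hmm)
    have hlt : X - (r * (q - 1) + q) < q := by omega
    have hz := Nat.eq_zero_of_dvd_of_lt hdvd hlt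
    omega
  · intro h; omega

lemma c2_count (p r m : ℕ) (hp : 2 ≤ p) (hm : m = r + 2) :
    ∀ e, 1 ≤ e → ∀ T, T + (r + 1) = r * p ^ e →
    Nat.card {b : Fin m → ℕ // ∑ j, b j = T ∧
      ∀ i, 1 ≤ i → i ≤ e - 1 → ∑ j, b j % p ^ i = (r + 1) * (p ^ i - 1)}
    = (p + m - 2).choose (m - 1) ^ (e - 1) * (r * p).choose (m - 1) := by
  refine Nat.le_induction ?_ ?_
  · -- base case e = 1
    intro T hT
    have hvac : ∀ b : Fin m → ℕ, (∑ j, b j = T ∧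
        ∀ i, 1 ≤ i → i ≤ 1 - 1 → ∑ j, b j % p ^ i = (r + 1) * (p ^ i - 1)) ↔ ∑ j, b j = T :=
      fun b => ⟨fun h => h.1, fun h => ⟨h, fun i hi1 hi0 => by omega⟩⟩
    rw [Nat.card_congr (Equiv.subtypeEquivRight hvac), card_tuple_sum]
    rw [pow_one] at hT
    have hn : m + T - 1 = r * p := by omega
    have hT2 : T = r * p - (m - 1) := by omega
    rw [hn, hT2, Nat.choose_symm (by omega)]
    simp
  · -- inductive step
    intro e he ih T hT
    have hp1 : (1:ℕ) ≤ p := by omega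
    have hp0 : 0 < p := by omega
    have hpe : 2 ≤ p ^ e := by
      calc 2 ≤ p := hp
        _ = p ^ 1 := (pow_one p).symm
        _ ≤ p ^ e := Nat.pow_le_pow_right (by omega) he
    obtain ⟨T', hT'def⟩ : ∃ x, x = r * p ^ e - (r + 1) := ⟨_, rfl⟩
    have hT' : T' + (r + 1) = r * p ^ e := by
      rw [hT'def]
      have h : r + 1 ≤ r * p ^ e := by
        rcases Nat.eq_zero_or_pos r with h0 | h0
        · exfalso
          subst h0
          simp at hT
        · have : r * 2 ≤ r * p ^ e := Nat.mul_le_mul_left r hpe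
          omega
      omega
    obtain ⟨s, hsdef⟩ : ∃ x, x = (r + 1) * (p - 1) := ⟨_, rfl⟩
    have hTs : T = s + p * T' := by
      have A : (T : ℤ) + (r + 1) = r * p ^ (e + 1) := by exact_mod_cast hT
      have B : (T' : ℤ) + (r + 1) = r * p ^ e := by exact_mod_cast hT'
      have hz : (T : ℤ) = (r + 1) * ((p : ℤ) - 1) + p * T' := by
        linear_combination A - (p : ℤ) * B
      rw [hsdef]
      zify [hp1]
      exact hz
    have hE : e + 1 - 1 = (e - 1) + 1 := by omega
    have hbd : Nat.card {d : Fin m → ℕ // (∀ j, d j < p) ∧ ∑ j, d j = s}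
        = (p + m - 2).choose (m - 1) := by
      rw [card_bounded_tuple_sum m p s (p - 1) hp1 (by rw [hsdef, hm]; ring) (by omega)]
      have h1 : m + (p - 1) - 1 = p + m - 2 := by omega
      have h2 : p + m - 2 - (m - 1) = p - 1 := by omega
      rw [h1, ← h2, Nat.choose_symm (by omega)]
    have hF1 : (r + 1) * (p ^ 1 - 1) = s := by rw [hsdef, pow_one]
    have hFs : ∀ i, 1 ≤ i → i ≤ e - 1 →
        (r + 1) * (p ^ (i + 1) - 1) = s + p * ((r + 1) * (p ^ i - 1)) := by
      intro i _ _
      have h1 : (1:ℕ) ≤ p ^ i := Nat.one_le_pow _ _ hp0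
      have h2 : (1:ℕ) ≤ p ^ (i + 1) := Nat.one_le_pow _ _ hp0
      rw [hsdef]
      zify [h1, h2, hp1]
      ring
    have hpeel : Nat.card {a : Fin m → ℕ // ∑ j, a j = s + p * T' ∧
          ∀ i, 1 ≤ i → i ≤ (e - 1) + 1 → ∑ j, a j % p ^ i = (r + 1) * (p ^ i - 1)}
        = Nat.card {d : Fin m → ℕ // (∀ j, d j < p) ∧ ∑ j, d j = s}
          * Nat.card {b : Fin m → ℕ // ∑ j, b j = T' ∧
              ∀ i, 1 ≤ i → i ≤ e - 1 → ∑ j, b j % p ^ i = (r + 1) * (p ^ i - 1)} :=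
      peel p m s T' (e - 1) hp (fun i => (r + 1) * (p ^ i - 1))
        (fun i => (r + 1) * (p ^ i - 1)) hF1 hFs
    rw [hTs]
    simp only [hE]
    rw [hpeel, ih T' hT', hbd, pow_succ]
    ring

/-- `cSeq p r m e` is the number of `m`-tuples `(a_1,…,a_m)` of natural numbers with
`a_1+⋯+a_m = r(p^e−1)` such that `(a_1 mod p^i)+⋯+(a_m mod p^i) ≥ r(p^i−1)+p^i`
for every `1 ≤ i ≤ e−1`; this is the `e`-th term of the complexity sequence of
the ring `T(V_r(K[x_1,…,x_m]))` of Enescu–Yao. -/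
noncomputable def cSeq (p r m e : ℕ) : ℕ :=
  Nat.card {a : Fin m → ℕ // (∑ j, a j = r * (p ^ e - 1)) ∧
    ∀ i, 1 ≤ i → i ≤ e - 1 → r * (p ^ i - 1) + p ^ i ≤ ∑ j, a j % p ^ i}


/-- when `m = r+2`,
`c_{p,r,m,e} = binom(rp, m−1) · binom(p+m−2, m−1)^{e−2} · binom(p+m−3, m−1)`. -/
theorem stmt_11 (p r m e : ℕ) (hp : p.Prime) (hr : 0 < r) (he : 2 ≤ e)
    (hm : m = r + 2) :
    cSeq p r m e =
      Nat.choose (r * p) (m - 1) *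
        Nat.choose (p + m - 2) (m - 1) ^ (e - 2) *
        Nat.choose (p + m - 3) (m - 1) := by
  have hp2 : 2 ≤ p := hp.two_le
  have hp1 : (1:ℕ) ≤ p := by omega
  have hpe1 : 2 ≤ p ^ (e - 1) := by
    calc 2 ≤ p := hp2
      _ = p ^ 1 := (pow_one p).symm
      _ ≤ p ^ (e - 1) := Nat.pow_le_pow_right (by omega) (by omega)
  obtain ⟨s, hsdef⟩ : ∃ x, x = (r + 1) * (p - 1) + 1 := ⟨_, rfl⟩
  obtain ⟨T', hT'def⟩ : ∃ x, x = r * p ^ (e - 1) - (r + 1) := ⟨_, rfl⟩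
  have hT' : T' + (r + 1) = r * p ^ (e - 1) := by
    rw [hT'def]
    have h : r + 1 ≤ r * p ^ (e - 1) := by
      have : r * 2 ≤ r * p ^ (e - 1) := Nat.mul_le_mul_left r hpe1
      omega
    omega
  have hTs : r * (p ^ e - 1) = s + p * T' := by
    have h1 : (1:ℕ) ≤ p ^ e := Nat.one_le_pow _ _ (by omega)
    have hee : e = (e - 1) + 1 := by omega
    have B : (T' : ℤ) + (r + 1) = r * p ^ (e - 1) := by exact_mod_cast hT'
    have hz : (r : ℤ) * ((p:ℤ) ^ e - 1) = (r + 1) * ((p:ℤ) - 1) + 1 + p * T' := by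
      rw [hee]
      linear_combination -(p : ℤ) * B
    rw [hsdef]
    zify [hp1, h1]
    exact hz
  have hE : e - 1 = (e - 2) + 1 := by omega
  have he1 : 1 ≤ e - 1 := by omega
  have hE2 : (e - 1) - 1 = e - 2 := by omega
  have hF1 : r * (p ^ 1 - 1) + p ^ 1 = s := by
    rw [hsdef, pow_one]
    zify [hp1]
    ring
  have hFs : ∀ i, 1 ≤ i → i ≤ e - 2 →
      r * (p ^ (i + 1) - 1) + p ^ (i + 1) = s + p * ((r + 1) * (p ^ i - 1)) := by
    intro i _ _
    have h1 : (1:ℕ) ≤ p ^ i := Nat.one_le_pow _ _ (by omega)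
    have h2 : (1:ℕ) ≤ p ^ (i + 1) := Nat.one_le_pow _ _ (by omega)
    rw [hsdef]
    zify [h1, h2, hp1]
    ring
  have hbd : Nat.card {d : Fin m → ℕ // (∀ j, d j < p) ∧ ∑ j, d j = s}
      = (p + m - 3).choose (m - 1) := by
    rw [card_bounded_tuple_sum m p s (p - 2) hp1
      (by rw [hsdef, hm]; zify [hp1, hp2]; ring) (by omega)]
    have h1 : m + (p - 2) - 1 = p + m - 3 := by omega
    have h2 : p + m - 3 - (m - 1) = p - 2 := by omega
    rw [h1, ← h2, Nat.choose_symm (by omega)]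
  have hinner := c2_count p r m hp2 hm (e - 1) he1 T' hT'
  rw [hE2] at hinner
  have hpeel : Nat.card {a : Fin m → ℕ // ∑ j, a j = s + p * T' ∧
        ∀ i, 1 ≤ i → i ≤ (e - 2) + 1 → ∑ j, a j % p ^ i = r * (p ^ i - 1) + p ^ i}
      = Nat.card {d : Fin m → ℕ // (∀ j, d j < p) ∧ ∑ j, d j = s}
        * Nat.card {b : Fin m → ℕ // ∑ j, b j = T' ∧
            ∀ i, 1 ≤ i → i ≤ e - 2 → ∑ j, b j % p ^ i = (r + 1) * (p ^ i - 1)} :=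
    peel p m s T' (e - 2) hp2 (fun i => r * (p ^ i - 1) + p ^ i)
      (fun i => (r + 1) * (p ^ i - 1)) hF1 hFs
  have step1 : cSeq p r m e = Nat.card {a : Fin m → ℕ // ∑ j, a j = r * (p ^ e - 1) ∧
      ∀ i, 1 ≤ i → i ≤ e - 1 → ∑ j, a j % p ^ i = r * (p ^ i - 1) + p ^ i} := by
    unfold cSeq
    apply Nat.card_congr
    apply Equiv.subtypeEquivRight
    intro a
    constructor
    · rintro ⟨h1, h2⟩
      exact ⟨h1, fun i hi1 hie =>
        (ge_iff_eq_aux p r m e i hp2 hm hi1 hie he a h1).mp (h2 i hi1 hie)⟩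
    · rintro ⟨h1, h2⟩
      exact ⟨h1, fun i hi1 hie =>
        (ge_iff_eq_aux p r m e i hp2 hm hi1 hie he a h1).mpr (h2 i hi1 hie)⟩
  rw [step1, hTs]
  simp only [hE]
  rw [hpeel, hinner, hbd]
  ring
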